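/- Let K be a field of characteristic not 2, V a K-vector space of dimension 3, and Q a quadratic form on V. For x in the Clifford algebra of Q define its adjugate adj x := reverse x * involute x * conj x, where conj y := reverse (involute y). Then the adjugate commutes with x and their product is a scalar: x * adj x = adj x * x, and x * adj x lies in the range of algebraMap K (CliffordAlgebra Q). (This is the paper's three-dimensional adjugate Adj(A) = ⟦A⟧₂₃⟦A⟧₁₃⟦A⟧₁₂ together with the claim that the adjugate of a Clifford number commutes with the Clifford number itself, both products giving the determinant.) -/

import Mathlib

open CliffordAlgebra

section AdjAux

variable {K V : Type*} [Field K] [AddCommGroup V] [Module K V] {Q : QuadraticForm K V}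

/-- Push membership in a span through a linear map. -/
theorem adj_map_mem_span {Φ : CliffordAlgebra Q →ₗ[K] CliffordAlgebra Q}
    {S : Set (CliffordAlgebra Q)} {W : Submodule K (CliffordAlgebra Q)}
    (hg : ∀ s ∈ S, Φ s ∈ W) {z : CliffordAlgebra Q}
    (hz : z ∈ Submodule.span K S) : Φ z ∈ W :=
  (Submodule.span_le (p := W.comap Φ)).mpr hg hz

set_option maxHeartbeats 2000000 in
theorem adj_aux (h2 : (2 : K) ≠ 0) (a b c : CliffordAlgebra Q) (qa qb qc : K)
    (haa : a * a = qa • 1) (hbb : b * b = qb • 1) (hcc : c * c = qc • 1)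
    (hba : b * a = -(a * b)) (hca : c * a = -(a * c)) (hcb : c * b = -(b * c))
    (hra : reverse a = a) (hrb : reverse b = b) (hrc : reverse c = c)
    (hia : involute a = -a) (hib : involute b = -b) (hic : involute c = -c)
    (hι : ∀ m : V, ι Q m ∈ Submodule.span K ({a, b, c} : Set (CliffordAlgebra Q)))
    (x : CliffordAlgebra Q) :
    x * (reverse x * involute x * reverse (involute x)) =
        (reverse x * involute x * reverse (involute x)) * x ∧
      x * (reverse x * involute x * reverse (involute x)) ∈
        Set.range (algebraMap K (CliffordAlgebra Q)) := by
  -- derived rewriting rules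
  have hba' : ∀ x : CliffordAlgebra Q, b * (a * x) = -(a * (b * x)) := fun x => by
    rw [← mul_assoc, hba, neg_mul, mul_assoc]
  have hca' : ∀ x : CliffordAlgebra Q, c * (a * x) = -(a * (c * x)) := fun x => by
    rw [← mul_assoc, hca, neg_mul, mul_assoc]
  have hcb' : ∀ x : CliffordAlgebra Q, c * (b * x) = -(b * (c * x)) := fun x => by
    rw [← mul_assoc, hcb, neg_mul, mul_assoc]
  have haa' : ∀ x : CliffordAlgebra Q, a * (a * x) = qa • x := fun x => by
    rw [← mul_assoc, haa, smul_mul_assoc, one_mul]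
  have hbb' : ∀ x : CliffordAlgebra Q, b * (b * x) = qb • x := fun x => by
    rw [← mul_assoc, hbb, smul_mul_assoc, one_mul]
  have hcc' : ∀ x : CliffordAlgebra Q, c * (c * x) = qc • x := fun x => by
    rw [← mul_assoc, hcc, smul_mul_assoc, one_mul]
  set ω : CliffordAlgebra Q := a * (b * c) with hω_def
  -- the spanning set
  set S : Set (CliffordAlgebra Q) := {1, a, b, c, a*b, a*c, b*c, a*(b*c)} with hS_def
  set M : Submodule K (CliffordAlgebra Q) := Submodule.span K S with hM_def
  have m1 : (1 : CliffordAlgebra Q) ∈ M := Submodule.subset_span (by simp [hS_def])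
  have ma : a ∈ M := Submodule.subset_span (by simp [hS_def])
  have mb : b ∈ M := Submodule.subset_span (by simp [hS_def])
  have mc : c ∈ M := Submodule.subset_span (by simp [hS_def])
  have mab : a*b ∈ M := Submodule.subset_span (by simp [hS_def])
  have mac : a*c ∈ M := Submodule.subset_span (by simp [hS_def])
  have mbc : b*c ∈ M := Submodule.subset_span (by simp [hS_def])
  have mabc : a*(b*c) ∈ M := Submodule.subset_span (by simp [hS_def])
  -- left multiplication by the generators preserves M
  have hmulgen : ∀ g ∈ ({a, b, c} : Set (CliffordAlgebra Q)), ∀ y ∈ M, g * y ∈ M := by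
    intro g hg
    have key : ∀ s ∈ S, g * s ∈ M := by
      simp only [Set.mem_insert_iff, Set.mem_singleton_iff] at hg
      intro s hs
      simp only [hS_def, Set.mem_insert_iff, Set.mem_singleton_iff] at hs
      rcases hg with rfl | rfl | rfl <;>
        rcases hs with rfl | rfl | rfl | rfl | rfl | rfl | rfl | rfl <;>
        · try simp only [mul_assoc, hba, hca, hcb, haa, hbb, hcc, hba', hca', hcb', haa', hbb',
            hcc', mul_smul_comm, smul_mul_assoc, smul_smul, mul_one, one_mul, mul_neg,
            neg_mul, neg_neg, smul_neg, neg_smul]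
          first
            | exact m1 | exact ma | exact mb | exact mc | exact mab | exact mac
            | exact mbc | exact mabc
            | exact M.smul_mem _ m1 | exact M.smul_mem _ ma | exact M.smul_mem _ mb
            | exact M.smul_mem _ mc | exact M.smul_mem _ mab | exact M.smul_mem _ mac
            | exact M.smul_mem _ mbc | exact M.smul_mem _ mabc
            | exact M.neg_mem mab | exact M.neg_mem mac | exact M.neg_mem mbc
            | exact M.neg_mem mabc
            | exact M.neg_mem (M.smul_mem _ ma) | exact M.neg_mem (M.smul_mem _ mb)
            | exact M.neg_mem (M.smul_mem _ mc) | exact M.neg_mem (M.smul_mem _ mab)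
            | exact M.neg_mem (M.smul_mem _ mac) | exact M.neg_mem (M.smul_mem _ mbc)
    intro y hy
    exact adj_map_mem_span (Φ := LinearMap.mulLeft K g) key hy
  -- every element lies in M
  have hspan : ∀ z : CliffordAlgebra Q, z ∈ M := by
    have main : ∀ z : CliffordAlgebra Q, ∀ y ∈ M, z * y ∈ M := by
      intro z
      induction z using CliffordAlgebra.induction with
      | algebraMap r =>
        intro y hy
        rw [Algebra.algebraMap_eq_smul_one, smul_mul_assoc, one_mul]
        exact M.smul_mem _ hy
      | ι m =>
        have hvecmul : ∀ v ∈ Submodule.span K ({a, b, c} : Set (CliffordAlgebra Q)),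
            ∀ y ∈ M, v * y ∈ M := by
          intro v hv
          induction hv using Submodule.span_induction with
          | mem u hu => exact hmulgen u hu
          | zero => intro y hy; rw [zero_mul]; exact M.zero_mem
          | add u v _ _ hu hv =>
            intro y hy; rw [add_mul]; exact M.add_mem (hu y hy) (hv y hy)
          | smul r u _ hu =>
            intro y hy; rw [smul_mul_assoc]; exact M.smul_mem _ (hu y hy)
        exact hvecmul _ (hι m)
      | mul u v hu hv =>
        intro y hy; rw [mul_assoc]; exact hu _ (hv y hy)
      | add u v hu hv =>
        intro y hy; rw [add_mul]; exact M.add_mem (hu y hy) (hv y hy)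
    intro z
    simpa using main z 1 m1
  -- action of involute and reverse on the monomials
  have hinv_ab : involute (a*b) = a*b := by rw [map_mul, hia, hib, neg_mul_neg]
  have hinv_ac : involute (a*c) = a*c := by rw [map_mul, hia, hic, neg_mul_neg]
  have hinv_bc : involute (b*c) = b*c := by rw [map_mul, hib, hic, neg_mul_neg]
  have hinv_abc : involute (a*(b*c)) = -(a*(b*c)) := by
    rw [map_mul, hia, hinv_bc, neg_mul]
  have hrev_ab : reverse (a*b) = -(a*b) := by rw [reverse.map_mul, hrb, hra, hba]
  have hrev_ac : reverse (a*c) = -(a*c) := by rw [reverse.map_mul, hrc, hra, hca]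
  have hrev_bc : reverse (b*c) = -(b*c) := by rw [reverse.map_mul, hrc, hrb, hcb]
  have hrev_abc : reverse (a*(b*c)) = -(a*(b*c)) := by
    rw [reverse.map_mul, hrev_bc, hra, neg_mul]
    simp only [mul_assoc, hba, hca, hcb, haa, hbb, hcc, hba', hca', hcb', haa', hbb',
      hcc', mul_smul_comm, smul_mul_assoc, smul_smul, mul_one, one_mul, mul_neg,
      neg_mul, neg_neg, smul_neg, neg_smul]
  have hinv1 : involute (1 : CliffordAlgebra Q) = 1 := map_one _
  have hrev1 : reverse (1 : CliffordAlgebra Q) = 1 := reverse.map_one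
  -- the linear maps used for the eigenspace projections
  let inv' : CliffordAlgebra Q →ₗ[K] CliffordAlgebra Q := involute.toLinearMap
  have hinv'_apply : ∀ z, inv' z = involute z := fun _ => rfl
  let Pinv : CliffordAlgebra Q →ₗ[K] CliffordAlgebra Q := LinearMap.id + inv'
  let Minv : CliffordAlgebra Q →ₗ[K] CliffordAlgebra Q := LinearMap.id - inv'
  let Prev : CliffordAlgebra Q →ₗ[K] CliffordAlgebra Q := LinearMap.id + reverse
  let Mrev : CliffordAlgebra Q →ₗ[K] CliffordAlgebra Q := LinearMap.id - reverse
  have hPinv : ∀ z, Pinv z = z + involute z := fun _ => rfl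
  have hMinv : ∀ z, Minv z = z - involute z := fun _ => rfl
  have hPrev : ∀ z, Prev z = z + reverse z := fun _ => rfl
  have hMrev : ∀ z, Mrev z = z - reverse z := fun _ => rfl
  -- lemma E : involute-fixed and reverse-fixed elements are scalars
  have lemE : ∀ z : CliffordAlgebra Q, involute z = z → reverse z = z →
      ∃ k : K, z = algebraMap K (CliffordAlgebra Q) k := by
    intro z hiz hrz
    have step1 : Pinv z ∈
        Submodule.span K ({1, a*b, a*c, b*c} : Set (CliffordAlgebra Q)) := by
      refine adj_map_mem_span (fun s hs => ?_) (hspan z)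
      simp only [hS_def, Set.mem_insert_iff, Set.mem_singleton_iff] at hs
      have hmem : ∀ u ∈ ({1, a*b, a*c, b*c} : Set (CliffordAlgebra Q)),
          u ∈ Submodule.span K ({1, a*b, a*c, b*c} : Set (CliffordAlgebra Q)) :=
        fun u hu => Submodule.subset_span hu
      rcases hs with rfl | rfl | rfl | rfl | rfl | rfl | rfl | rfl <;>
        simp only [hPinv,
          hinv1, hia, hib, hic, hinv_ab, hinv_ac, hinv_bc, hinv_abc, add_neg_cancel,
          neg_add_cancel] <;>
        first
          | exact Submodule.zero_mem _
          | exact Submodule.add_mem _ (hmem _ (by simp)) (hmem _ (by simp))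
    have hz1 : z ∈ Submodule.span K ({1, a*b, a*c, b*c} : Set (CliffordAlgebra Q)) := by
      have h2z : Pinv z = (2:K) • z := by
        rw [hPinv, hiz, two_smul]
      rw [h2z] at step1
      have := Submodule.smul_mem _ ((2:K)⁻¹) step1
      rwa [smul_smul, inv_mul_cancel₀ h2, one_smul] at this
    have step2 : Prev z ∈
        Submodule.span K ({(1 : CliffordAlgebra Q)} : Set (CliffordAlgebra Q)) := by
      refine adj_map_mem_span (fun s hs => ?_) hz1
      simp only [Set.mem_insert_iff, Set.mem_singleton_iff] at hs
      rcases hs with rfl | rfl | rfl | rfl <;>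
        simp only [hPrev, hrev1, hrev_ab, hrev_ac,
          hrev_bc, add_neg_cancel] <;>
        first
          | exact Submodule.zero_mem _
          | exact Submodule.add_mem _ (Submodule.subset_span (by simp))
              (Submodule.subset_span (by simp))
    have hz2 : z ∈ Submodule.span K ({(1 : CliffordAlgebra Q)} : Set (CliffordAlgebra Q)) := by
      have h2z : Prev z = (2:K) • z := by
        rw [hPrev, hrz, two_smul]
      rw [h2z] at step2
      have := Submodule.smul_mem _ ((2:K)⁻¹) step2
      rwa [smul_smul, inv_mul_cancel₀ h2, one_smul] at this
    obtain ⟨k, hk⟩ := Submodule.mem_span_singleton.mp hz2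
    exact ⟨k, by rw [← hk, Algebra.algebraMap_eq_smul_one]⟩
  -- lemma P : involute-negated and reverse-negated elements are multiples of ω
  have lemP : ∀ z : CliffordAlgebra Q, involute z = -z → reverse z = -z →
      ∃ k : K, z = k • ω := by
    intro z hiz hrz
    have step1 : Minv z ∈
        Submodule.span K ({a, b, c, a*(b*c)} : Set (CliffordAlgebra Q)) := by
      refine adj_map_mem_span (fun s hs => ?_) (hspan z)
      simp only [hS_def, Set.mem_insert_iff, Set.mem_singleton_iff] at hs
      have hmem : ∀ u ∈ ({a, b, c, a*(b*c)} : Set (CliffordAlgebra Q)),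
          u ∈ Submodule.span K ({a, b, c, a*(b*c)} : Set (CliffordAlgebra Q)) :=
        fun u hu => Submodule.subset_span hu
      rcases hs with rfl | rfl | rfl | rfl | rfl | rfl | rfl | rfl <;>
        simp only [hMinv,
          hinv1, hia, hib, hic, hinv_ab, hinv_ac, hinv_bc, hinv_abc, sub_self,
          sub_neg_eq_add] <;>
        first
          | exact Submodule.zero_mem _
          | exact Submodule.add_mem _ (hmem _ (by simp)) (hmem _ (by simp))
    have hz1 : z ∈ Submodule.span K ({a, b, c, a*(b*c)} : Set (CliffordAlgebra Q)) := by
      have h2z : Minv z = (2:K) • z := by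
        rw [hMinv, hiz, sub_neg_eq_add, two_smul]
      rw [h2z] at step1
      have := Submodule.smul_mem _ ((2:K)⁻¹) step1
      rwa [smul_smul, inv_mul_cancel₀ h2, one_smul] at this
    have step2 : Mrev z ∈
        Submodule.span K ({a*(b*c)} : Set (CliffordAlgebra Q)) := by
      refine adj_map_mem_span (fun s hs => ?_) hz1
      simp only [Set.mem_insert_iff, Set.mem_singleton_iff] at hs
      rcases hs with rfl | rfl | rfl | rfl <;>
        simp only [hMrev, hra, hrb, hrc, hrev_abc,
          sub_self, sub_neg_eq_add] <;>
        first
          | exact Submodule.zero_mem _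
          | exact Submodule.add_mem _ (Submodule.subset_span (by simp))
              (Submodule.subset_span (by simp))
    have hz2 : z ∈ Submodule.span K ({a*(b*c)} : Set (CliffordAlgebra Q)) := by
      have h2z : Mrev z = (2:K) • z := by
        rw [hMrev, hrz, sub_neg_eq_add, two_smul]
      rw [h2z] at step2
      have := Submodule.smul_mem _ ((2:K)⁻¹) step2
      rwa [smul_smul, inv_mul_cancel₀ h2, one_smul] at this
    obtain ⟨k, hk⟩ := Submodule.mem_span_singleton.mp hz2
    exact ⟨k, hk.symm⟩
  -- lemma C : conjugation-fixed elements lie in span {1, ω}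
  have lemC : ∀ z : CliffordAlgebra Q, reverse (involute z) = z →
      z ∈ Submodule.span K ({1, ω} : Set (CliffordAlgebra Q)) := by
    intro z hcz
    let cj : CliffordAlgebra Q →ₗ[K] CliffordAlgebra Q := reverse ∘ₗ inv'
    let Pcj : CliffordAlgebra Q →ₗ[K] CliffordAlgebra Q := LinearMap.id + cj
    have hPcj : ∀ w, Pcj w = w + reverse (involute w) := fun _ => rfl
    have step1 : Pcj z ∈
        Submodule.span K ({1, ω} : Set (CliffordAlgebra Q)) := by
      refine adj_map_mem_span (fun s hs => ?_) (hspan z)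
      simp only [hS_def, Set.mem_insert_iff, Set.mem_singleton_iff] at hs
      rcases hs with rfl | rfl | rfl | rfl | rfl | rfl | rfl | rfl <;>
        simp only [hPcj,
          hinv1, hrev1, hia, hib, hic, hinv_ab, hinv_ac, hinv_bc, hinv_abc,
          map_neg, hra, hrb, hrc, hrev_ab, hrev_ac, hrev_bc, hrev_abc, neg_neg,
          add_neg_cancel] <;>
        first
          | exact Submodule.zero_mem _
          | exact Submodule.add_mem _ (Submodule.subset_span (by simp [hω_def]))
              (Submodule.subset_span (by simp [hω_def]))
    have h2z : Pcj z = (2:K) • z := by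
      rw [hPcj, hcz, two_smul]
    rw [h2z] at step1
    have := Submodule.smul_mem _ ((2:K)⁻¹) step1
    rwa [smul_smul, inv_mul_cancel₀ h2, one_smul] at this
  -- ω is central
  have hωcomm : ∀ y : CliffordAlgebra Q, ω * y = y * ω := by
    have hgen : ∀ g ∈ ({a, b, c} : Set (CliffordAlgebra Q)), ω * g = g * ω := by
      intro g hg
      simp only [Set.mem_insert_iff, Set.mem_singleton_iff] at hg
      rcases hg with rfl | rfl | rfl <;>
        · simp only [hω_def, mul_assoc, hba, hca, hcb, haa, hbb, hcc, hba', hca', hcb',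
            haa', hbb', hcc', mul_smul_comm, smul_mul_assoc, smul_smul, mul_one, one_mul,
            mul_neg, neg_mul, neg_neg, smul_neg, neg_smul]
    have hvec : ∀ v ∈ Submodule.span K ({a, b, c} : Set (CliffordAlgebra Q)),
        ω * v = v * ω := by
      intro v hv
      induction hv using Submodule.span_induction with
      | mem u hu => exact hgen u hu
      | zero => simp
      | add u v _ _ hu hv => rw [mul_add, add_mul, hu, hv]
      | smul r u _ hu => rw [mul_smul_comm, smul_mul_assoc, hu]
    intro y
    induction y using CliffordAlgebra.induction with
    | algebraMap r => exact (Algebra.commutes r ω).symm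
    | ι m => exact hvec _ (hι m)
    | mul u v hu hv => rw [← mul_assoc, hu, mul_assoc, hv, ← mul_assoc]
    | add u v hu hv => rw [mul_add, add_mul, hu, hv]
  -- useful conjugation facts
  have hIR : ∀ z : CliffordAlgebra Q, involute (reverse z) = reverse (involute z) :=
    fun z => (reverse_involute z).symm
  have hCC : ∀ z : CliffordAlgebra Q, reverse (involute (reverse (involute z))) = z := by
    intro z
    rw [← hIR, reverse_reverse, involute_involute]
  have hconj_mul : ∀ p q : CliffordAlgebra Q,
      reverse (involute (p * q)) = reverse (involute q) * reverse (involute p) := by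
    intro p q; rw [map_mul, reverse.map_mul]
  -- traciality of T0 and T3 (as linear maps)
  let cjL : CliffordAlgebra Q →ₗ[K] CliffordAlgebra Q := reverse ∘ₗ inv'
  let T0L : CliffordAlgebra Q →ₗ[K] CliffordAlgebra Q := (LinearMap.id + inv') + ((reverse : CliffordAlgebra Q →ₗ[K] CliffordAlgebra Q) + cjL)
  let T3L : CliffordAlgebra Q →ₗ[K] CliffordAlgebra Q := (LinearMap.id - inv') - ((reverse : CliffordAlgebra Q →ₗ[K] CliffordAlgebra Q) - cjL)
  have hT0L : ∀ z, T0L z = z + involute z + reverse z + reverse (involute z) := by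
    intro z
    show z + involute z + (reverse z + reverse (involute z)) = _
    abel
  have hT3L : ∀ z, T3L z = z - involute z - reverse z + reverse (involute z) := by
    intro z
    show z - involute z - (reverse z - reverse (involute z)) = _
    abel
  have htrace : ∀ u y : CliffordAlgebra Q,
      T0L (u * y) = T0L (y * u) ∧ T3L (u * y) = T3L (y * u) := by
    intro u
    induction u using CliffordAlgebra.induction with
    | algebraMap r => intro y; rw [Algebra.commutes]; exact ⟨rfl, rfl⟩
    | ι m =>
      intro y
      set u := ι Q m with hu_def
      have hiu : involute u = -u := involute_ι m
      have hru : reverse u = u := reverse_ι m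
      have hT3mem : ∃ k : K, y - involute y - reverse y + reverse (involute y) = k • ω := by
        refine lemP _ ?_ ?_
        · simp only [map_sub, map_add, involute_involute, hIR]
          abel
        · simp only [map_sub, map_add, reverse_reverse, hIR]
          abel
      obtain ⟨k3, hk3⟩ := hT3mem
      have hcomm3 : u * (y - involute y - reverse y + reverse (involute y))
          = (y - involute y - reverse y + reverse (involute y)) * u := by
        rw [hk3, mul_smul_comm, smul_mul_assoc, hωcomm u]
      have hT0mem : ∃ k : K, y + involute y + reverse y + reverse (involute y)
          = algebraMap K (CliffordAlgebra Q) k := by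
        refine lemE _ ?_ ?_
        · simp only [map_add, involute_involute, hIR]
          abel
        · simp only [map_add, reverse_reverse, hIR]
          abel
      obtain ⟨k0, hk0⟩ := hT0mem
      have hcomm0 : u * (y + involute y + reverse y + reverse (involute y))
          = (y + involute y + reverse y + reverse (involute y)) * u := by
        rw [hk0]; exact (Algebra.commutes k0 u).symm
      constructor
      · have expand : T0L (u*y) - T0L (y*u)
            = u * (y - involute y - reverse y + reverse (involute y))
              - (y - involute y - reverse y + reverse (involute y)) * u := by
          rw [hT0L, hT0L]
          simp only [map_mul, reverse.map_mul, hiu, hru, hIR, map_neg, neg_mul, mul_neg]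
          noncomm_ring
        have h0 : T0L (u*y) - T0L (y*u) = 0 := expand.trans (sub_eq_zero.mpr hcomm3)
        exact sub_eq_zero.mp h0
      · have expand : T3L (u*y) - T3L (y*u)
            = u * (y + involute y + reverse y + reverse (involute y))
              - (y + involute y + reverse y + reverse (involute y)) * u := by
          rw [hT3L, hT3L]
          simp only [map_mul, reverse.map_mul, hiu, hru, hIR, map_neg, neg_mul, mul_neg]
          noncomm_ring
        have h0 : T3L (u*y) - T3L (y*u) = 0 := expand.trans (sub_eq_zero.mpr hcomm0)
        exact sub_eq_zero.mp h0
    | mul u v hu hv =>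
      intro y
      constructor
      · rw [mul_assoc, (hu (v * y)).1, mul_assoc, (hv (y * u)).1, ← mul_assoc]
      · rw [mul_assoc, (hu (v * y)).2, mul_assoc, (hv (y * u)).2, ← mul_assoc]
    | add u v hu hv =>
      intro y
      constructor
      · rw [add_mul, map_add, (hu y).1, (hv y).1, ← map_add, ← mul_add]
      · rw [add_mul, map_add, (hu y).2, (hv y).2, ← map_add, ← mul_add]
  -- the key commutation : x * conj x = conj x * x
  set cx : CliffordAlgebra Q := reverse (involute x) with hcx_def
  have hconj_cx : reverse (involute cx) = x := hCC x
  have he : reverse (involute (cx * x)) = cx * x := by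
    rw [hconj_mul, hconj_cx]
  have hdelta : x * cx = cx * x := by
    have hd : reverse (involute (x * cx)) = x * cx := by
      rw [hconj_mul, hconj_cx]
    have h0 : T0L (x * cx - cx * x) = 0 := by
      rw [map_sub, (htrace x cx).1, sub_self]
    have h3 : T3L (x * cx - cx * x) = 0 := by
      rw [map_sub, (htrace x cx).2, sub_self]
    have hconjδ : reverse (involute (x * cx - cx * x)) = x * cx - cx * x := by
      rw [map_sub, map_sub, hd, he]
    have key : (4:K) • (x * cx - cx * x) = 0 := by
      have expand : (4:K) • (x * cx - cx * x)
          = T0L (x * cx - cx * x) + T3L (x * cx - cx * x) := by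
        rw [hT0L, hT3L, hconjδ]; module
      rw [expand, h0, h3, add_zero]
    have h4 : (4:K) ≠ 0 := by
      have h := mul_ne_zero h2 h2
      norm_num at h
      exact h
    have := (smul_eq_zero.mp key).resolve_left h4
    exact sub_eq_zero.mp this
  -- final assembly
  set r : CliffordAlgebra Q := reverse x * involute x with hr_def
  have he_mem : cx * x ∈ Submodule.span K ({1, ω} : Set (CliffordAlgebra Q)) := lemC _ he
  obtain ⟨p, q, hpq⟩ := Submodule.mem_span_pair.mp he_mem
  have hrevω : reverse ω = -ω := by rw [hω_def]; exact hrev_abc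
  have hr_eq : r = p • 1 - q • ω := by
    have h1 : reverse (cx * x) = r := by
      rw [reverse.map_mul, hcx_def, reverse_reverse, hr_def]
    calc r = reverse (cx * x) := h1.symm
      _ = reverse (p • 1 + q • ω) := by rw [hpq]
      _ = p • 1 + q • (-ω) := by rw [map_add, map_smul, map_smul, hrev1, hrevω]
      _ = p • 1 - q • ω := by module
  have hrcomm : ∀ y : CliffordAlgebra Q, r * y = y * r := by
    intro y
    rw [hr_eq]
    simp only [sub_mul, mul_sub, smul_mul_assoc, mul_smul_comm, one_mul, mul_one, hωcomm y]
  have hxadj : x * (r * cx) = r * (cx * x) := by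
    calc x * (r * cx) = (x * r) * cx := (mul_assoc _ _ _).symm
      _ = (r * x) * cx := by rw [← hrcomm x]
      _ = r * (x * cx) := mul_assoc _ _ _
      _ = r * (cx * x) := by rw [hdelta]
  constructor
  · exact hxadj.trans (mul_assoc _ _ _).symm
  · have hωω : ω * ω = -((qc*(qb*qa)) • 1) := by
      rw [hω_def]
      simp only [mul_assoc, hba, hca, hcb, haa, hbb, hcc, hba', hca', hcb', haa', hbb',
        hcc', mul_smul_comm, smul_mul_assoc, smul_smul, mul_one, one_mul, mul_neg,
        neg_mul, neg_neg, smul_neg, neg_smul]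
    rw [hxadj, ← hpq, hr_eq]
    refine ⟨p*p + qc*(qb*qa)*(q*q), ?_⟩
    rw [Algebra.algebraMap_eq_smul_one]
    simp only [sub_mul, mul_add, smul_mul_assoc, mul_smul_comm, one_mul, mul_one,
      smul_smul, hωω, smul_neg]
    module

end AdjAux

/-- In dimension 3 (char K ≠ 2), the adjugate
`adj x = reverse x * involute x * conj x` (the paper's
`Adj(A) = ⟦A⟧₂₃ ⟦A⟧₁₃ ⟦A⟧₁₂`) commutes with `x`, and `x * adj x` is a scalar
(the determinant). -/
theorem adj_dim_three (K V : Type*) [Field K] [AddCommGroup V] [Module K V]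
    [FiniteDimensional K V] (h2 : (2 : K) ≠ 0)
    (hdim : Module.finrank K V = 3)
    (Q : QuadraticForm K V) (x : CliffordAlgebra Q) :
    x * (reverse x * involute x * reverse (involute x)) =
        (reverse x * involute x * reverse (involute x)) * x ∧
      x * (reverse x * involute x * reverse (involute x)) ∈
        Set.range (algebraMap K (CliffordAlgebra Q)) := by
  haveI : Invertible (2 : K) := invertibleOfNonzero h2
  obtain ⟨v, hv⟩ := LinearMap.BilinForm.exists_orthogonal_basis
    (QuadraticForm.associated_isSymm (S := K) Q)
  let bb : Module.Basis (Fin 3) K V := v.reindex (finCongr hdim)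
  have hortho : ∀ i j : Fin 3, i ≠ j → Q.IsOrtho (bb i) (bb j) := by
    intro i j hij
    have hne : (finCongr hdim).symm i ≠ (finCongr hdim).symm j :=
      fun h => hij ((finCongr hdim).symm.injective h)
    have h0 := hv hne
    have : QuadraticMap.associated (R := K) Q |>.IsOrtho (bb i) (bb j) := by
      exact QuadraticMap.associated_isOrtho.mpr (by simpa [bb, Function.onFun, Module.Basis.reindex_apply] using h0)
    exact QuadraticMap.associated_isOrtho.mp this
  set a : CliffordAlgebra Q := ι Q (bb 0)
  set b : CliffordAlgebra Q := ι Q (bb 1)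
  set c : CliffordAlgebra Q := ι Q (bb 2)
  refine adj_aux h2 a b c (Q (bb 0)) (Q (bb 1)) (Q (bb 2)) ?_ ?_ ?_ ?_ ?_ ?_
    (reverse_ι _) (reverse_ι _) (reverse_ι _) (involute_ι _) (involute_ι _) (involute_ι _)
    ?_ x
  · rw [ι_sq_scalar, Algebra.algebraMap_eq_smul_one]
  · rw [ι_sq_scalar, Algebra.algebraMap_eq_smul_one]
  · rw [ι_sq_scalar, Algebra.algebraMap_eq_smul_one]
  · exact ι_mul_ι_comm_of_isOrtho (hortho 0 1 (by decide)).symm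
  · exact ι_mul_ι_comm_of_isOrtho (hortho 0 2 (by decide)).symm
  · exact ι_mul_ι_comm_of_isOrtho (hortho 1 2 (by decide)).symm
  · intro m
    have hm : m = ∑ i : Fin 3, bb.repr m i • bb i := (bb.sum_repr m).symm
    rw [hm, map_sum]
    refine Submodule.sum_mem _ fun i _ => ?_
    rw [map_smul]
    refine Submodule.smul_mem _ _ (Submodule.subset_span ?_)
    fin_cases i <;> simp [a, b, c]
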